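/- Let u be a C^5 function on [0,L] satisfying u(0) = u(L) = D^2u(L) = 0, D^3u(0) = a_{31} Du(0), and D^3u(L) = b_{31} Du(L), where b_{31} > 1/2 and a_{31} < 1/2. Then ∫_0^L (D^3u − D^5u)(x) u(x) dx ≥ (b_{31} − 1/2)(Du(L))^2 + (1/2 − a_{31})(Du(0))^2 + (1/4)(D^2u(0))^2 ≥ 0. -/

import Mathlib

noncomputable def D (L : ℝ) (u : ℝ → ℝ) (i : ℕ) (x : ℝ) : ℝ :=
  iteratedDerivWithin i u (Set.Icc 0 L) x

theorem stmt_6 (L : ℝ) (hL : 0 < L) (a31 b31 : ℝ) (ha : a31 < 1 / 2) (hb : 1 / 2 < b31)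
    (u : ℝ → ℝ) (hu : ContDiffOn ℝ 5 u (Set.Icc 0 L))
    (h0 : u 0 = 0) (hLv : u L = 0) (h2L : D L u 2 L = 0)
    (h30 : D L u 3 0 = a31 * D L u 1 0) (h3L : D L u 3 L = b31 * D L u 1 L) :
    (∫ x in (0:ℝ)..L, (D L u 3 x - D L u 5 x) * u x) ≥
      (b31 - 1 / 2) * (D L u 1 L) ^ 2 + (1 / 2 - a31) * (D L u 1 0) ^ 2 +
        (1 / 4) * (D L u 2 0) ^ 2 ∧
    (b31 - 1 / 2) * (D L u 1 L) ^ 2 + (1 / 2 - a31) * (D L u 1 0) ^ 2 +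
        (1 / 4) * (D L u 2 0) ^ 2 ≥ 0 := by
  set s : Set ℝ := Set.Icc 0 L with hsdef
  have hs : UniqueDiffOn ℝ s := uniqueDiffOn_Icc hL
  have hD0 : D L u 0 = u := by
    funext x; simp [D, iteratedDerivWithin_zero]
  -- derivative of D i is D (i+1) within s
  have hd : ∀ i : ℕ, i < 5 → ∀ x ∈ s, HasDerivWithinAt (D L u i) (D L u (i + 1) x) s x := by
    intro i hi x hx
    have hdiff : DifferentiableOn ℝ (iteratedDerivWithin i u s) s :=
      hu.differentiableOn_iteratedDerivWithin (by exact_mod_cast hi) hs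
    have h1 := (hdiff x hx).hasDerivWithinAt
    have h2 : D L u (i + 1) x = derivWithin (iteratedDerivWithin i u s) s x := by
      simp [D, iteratedDerivWithin_succ]; rfl
    rw [show D L u i = iteratedDerivWithin i u s from rfl, h2]
    exact h1
  have hdu : ∀ x ∈ s, HasDerivWithinAt u (D L u 1 x) s x := by
    intro x hx
    have := hd 0 (by norm_num) x hx
    rwa [hD0] at this
  -- continuity
  have hc : ∀ i : ℕ, i ≤ 5 → ContinuousOn (D L u i) s := by
    intro i hi
    exact hu.continuousOn_iteratedDerivWithin (by exact_mod_cast hi) hs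
  have hcu : ContinuousOn u s := by
    have := hc 0 (by norm_num); rwa [hD0] at this
  -- antiderivative
  set F : ℝ → ℝ := fun x => D L u 2 x * u x - D L u 1 x * D L u 1 x / 2 -
      D L u 4 x * u x + D L u 3 x * D L u 1 x - D L u 2 x * D L u 2 x / 2 with hF
  have hFd : ∀ x ∈ s, HasDerivWithinAt F ((D L u 3 x - D L u 5 x) * u x) s x := by
    intro x hx
    have h1 := hd 1 (by norm_num) x hx
    have h2 := hd 2 (by norm_num) x hx
    have h3 := hd 3 (by norm_num) x hx
    have h4 := hd 4 (by norm_num) x hx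
    have hu' := hdu x hx
    have := ((((h2.mul hu').sub ((h1.mul h1).div_const 2)).sub (h4.mul hu')).add
        (h3.mul h1)).sub ((h2.mul h2).div_const 2)
    refine this.congr_deriv ?_
    show _ = _
    ring
  have hFc : ContinuousOn F s := by
    have c1 := hc 1 (by norm_num)
    have c2 := hc 2 (by norm_num)
    have c3 := hc 3 (by norm_num)
    have c4 := hc 4 (by norm_num)
    exact ((((c2.mul hcu).sub ((c1.mul c1).div_const 2)).sub (c4.mul hcu)).add
        (c3.mul c1)).sub ((c2.mul c2).div_const 2)
  have hle : (0:ℝ) ≤ L := hL.le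
  have hInt : IntervalIntegrable (fun x => (D L u 3 x - D L u 5 x) * u x)
      MeasureTheory.volume 0 L := by
    apply ContinuousOn.intervalIntegrable
    rw [Set.uIcc_of_le hle]
    exact ((hc 3 (by norm_num)).sub (hc 5 (by norm_num))).mul hcu
  have hftc : (∫ x in (0:ℝ)..L, (D L u 3 x - D L u 5 x) * u x) = F L - F 0 := by
    apply intervalIntegral.integral_eq_sub_of_hasDeriv_right_of_le hle
    · exact hFc
    · intro x hx
      have hxs : x ∈ s := Set.mem_Icc.2 ⟨hx.1.le, hx.2.le⟩
      have hmem : s ∈ nhds x := Icc_mem_nhds hx.1 hx.2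
      exact (((hFd x hxs).hasDerivAt hmem).hasDerivWithinAt)
    · exact hInt
  have hFL : F L = (b31 - 1/2) * (D L u 1 L)^2 := by
    simp only [hF, hLv, h3L, h2L]; ring
  have hF0 : F 0 = (a31 - 1/2) * (D L u 1 0)^2 - (D L u 2 0)^2 / 2 := by
    simp only [hF, h0, h30]; ring
  constructor
  · rw [hftc, hFL, hF0]
    nlinarith [sq_nonneg (D L u 2 0)]
  · nlinarith [sq_nonneg (D L u 1 L), sq_nonneg (D L u 1 0), sq_nonneg (D L u 2 0)]
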